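/- Let d ≥ 1 and let ρ be a group homomorphism from SO(3) (real 3×3 matrices R with Rᵀ R = 1 and det R = 1) to the orthogonal linear isometries of ℝ^d such that the only subspaces of ℝ^d invariant under all ρ(R) are 0 and ℝ^d (ρ is irreducible). Suppose Y and Ỹ are functions from the unit sphere {x ∈ ℝ³ : ‖x‖ = 1} to ℝ^d that are equivariant, i.e. Y(R x) = ρ(R) Y(x) and Ỹ(R x) = ρ(R) Ỹ(x) for all R ∈ SO(3) and all unit vectors x, and normalized, i.e. ‖Y(x)‖ = ‖Ỹ(x)‖ = 1 for all unit vectors x. Then Ỹ = Y or Ỹ = −Y. -/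

import Mathlib

set_option maxHeartbeats 1000000
set_option synthInstance.maxHeartbeats 200000

open Matrix RealInnerProductSpace

namespace SphAux

noncomputable section

abbrev SO3 := Matrix.specialOrthogonalGroup (Fin 3) ℝ

lemma star_eq_transpose {n : Type*} [Fintype n] [DecidableEq n] (A : Matrix n n ℝ) :
    star A = Aᵀ := by
  ext i j; simp [Matrix.star_apply]

lemma so3_orth (g : SO3) : g.1ᵀ * g.1 = 1 := by
  have h : star g.1 * g.1 = 1 := g.2.1.1
  rwa [star_eq_transpose] at h

lemma so3_orth' (g : SO3) : g.1 * g.1ᵀ = 1 := by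
  have h : g.1 * star g.1 = 1 := g.2.1.2
  rwa [star_eq_transpose] at h

/-- "inverse" in SO3 (transpose), avoiding need of a Group instance. -/
def gi (g : SO3) : SO3 :=
  ⟨g.1ᵀ, by
    refine Matrix.mem_specialOrthogonalGroup_iff.mpr ⟨⟨?_, ?_⟩, ?_⟩
    · rw [star_eq_transpose, Matrix.transpose_transpose]; exact so3_orth' g
    · rw [star_eq_transpose, Matrix.transpose_transpose]; exact so3_orth g
    · rw [Matrix.det_transpose]; exact (Matrix.mem_specialOrthogonalGroup_iff.mp g.2).2⟩

@[simp] lemma gi_val (g : SO3) : (gi g).1 = g.1ᵀ := rfl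

lemma gi_mul (g : SO3) : gi g * g = 1 := Subtype.ext (so3_orth g)
lemma mul_gi (g : SO3) : g * gi g = 1 := Subtype.ext (so3_orth' g)
lemma gi_gi (g : SO3) : gi (gi g) = g := Subtype.ext (Matrix.transpose_transpose g.1)

def e3 : EuclideanSpace ℝ (Fin 3) := EuclideanSpace.single 2 1

lemma norm_e3 : ‖e3‖ = 1 := by simp [e3, EuclideanSpace.norm_single]

lemma mulVec_e3 (A : Matrix (Fin 3) (Fin 3) ℝ) : A.mulVec e3 = fun i => A i 2 := by
  funext i
  simp [Matrix.mulVec, dotProduct, Fin.sum_univ_three, e3, EuclideanSpace.single_apply,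
    Fin.ext_iff]

lemma norm_sq_one {x : EuclideanSpace ℝ (Fin 3)} (hx : ‖x‖ = 1) :
    x 0 ^ 2 + x 1 ^ 2 + x 2 ^ 2 = 1 := by
  have h := EuclideanSpace.norm_eq x
  rw [hx] at h
  have h2 : ∑ i : Fin 3, ‖x i‖ ^ 2 = 1 := by
    have hnn : (0:ℝ) ≤ ∑ i : Fin 3, ‖x i‖ ^ 2 := by positivity
    nlinarith [Real.sq_sqrt hnn, h.symm]
  rw [Fin.sum_univ_three] at h2
  simpa [sq_abs, Real.norm_eq_abs] using h2

/-- rotation about the z-axis -/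
def Rz (a b : ℝ) : Matrix (Fin 3) (Fin 3) ℝ := !![a, -b, 0; b, a, 0; 0, 0, 1]

/-- rotation about the y-axis -/
def Ry (c s : ℝ) : Matrix (Fin 3) (Fin 3) ℝ := !![c, 0, s; 0, 1, 0; -s, 0, c]

lemma Rz_transpose (a b : ℝ) : (Rz a b)ᵀ = Rz a (-b) := by
  ext i j
  fin_cases i <;> fin_cases j <;> simp [Rz, Matrix.transpose_apply]

lemma Ry_transpose (c s : ℝ) : (Ry c s)ᵀ = Ry c (-s) := by
  ext i j
  fin_cases i <;> fin_cases j <;> simp [Ry, Matrix.transpose_apply]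

lemma Rz_mul_Rz (a b a' b' : ℝ) :
    Rz a b * Rz a' b' = Rz (a * a' - b * b') (a * b' + b * a') := by
  ext i j
  rw [Matrix.mul_apply]
  fin_cases i <;> fin_cases j <;> simp [Rz, Fin.sum_univ_three] <;> ring

lemma Ry_mul_Ry (c s c' s' : ℝ) :
    Ry c s * Ry c' s' = Ry (c * c' - s * s') (c * s' + s * c') := by
  ext i j
  rw [Matrix.mul_apply]
  fin_cases i <;> fin_cases j <;> simp [Ry, Fin.sum_univ_three] <;> ring

lemma Rz_one : Rz 1 0 = 1 := by
  ext i j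
  fin_cases i <;> fin_cases j <;> simp [Rz, Matrix.one_apply, Matrix.vecHead, Matrix.vecTail]

lemma Ry_one : Ry 1 0 = 1 := by
  ext i j
  fin_cases i <;> fin_cases j <;> simp [Ry, Matrix.one_apply, Matrix.vecHead, Matrix.vecTail]

lemma Rz_mem {a b : ℝ} (h : a ^ 2 + b ^ 2 = 1) :
    Rz a b ∈ Matrix.specialOrthogonalGroup (Fin 3) ℝ := by
  have key : Rz a b * star (Rz a b) = 1 := by
    rw [star_eq_transpose, Rz_transpose, Rz_mul_Rz]
    have h1 : a * a - b * -b = 1 := by nlinarith [h]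
    have h2 : a * -b + b * a = 0 := by ring
    rw [h1, h2, Rz_one]
  have key' : star (Rz a b) * Rz a b = 1 := by
    rw [star_eq_transpose, Rz_transpose, Rz_mul_Rz]
    have h1 : a * a - -b * b = 1 := by nlinarith [h]
    have h2 : a * b + -b * a = 0 := by ring
    rw [h1, h2, Rz_one]
  refine Matrix.mem_specialOrthogonalGroup_iff.mpr ⟨⟨key', key⟩, ?_⟩
  rw [Matrix.det_fin_three]
  simp [Rz]
  nlinarith [h]

lemma Ry_mem {c s : ℝ} (h : c ^ 2 + s ^ 2 = 1) :
    Ry c s ∈ Matrix.specialOrthogonalGroup (Fin 3) ℝ := by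
  have key : Ry c s * star (Ry c s) = 1 := by
    rw [star_eq_transpose, Ry_transpose, Ry_mul_Ry]
    have h1 : c * c - s * -s = 1 := by nlinarith [h]
    have h2 : c * -s + s * c = 0 := by ring
    rw [h1, h2, Ry_one]
  have key' : star (Ry c s) * Ry c s = 1 := by
    rw [star_eq_transpose, Ry_transpose, Ry_mul_Ry]
    have h1 : c * c - -s * s = 1 := by nlinarith [h]
    have h2 : c * s + -s * c = 0 := by ring
    rw [h1, h2, Ry_one]
  refine Matrix.mem_specialOrthogonalGroup_iff.mpr ⟨⟨key', key⟩, ?_⟩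
  rw [Matrix.det_fin_three]
  simp [Ry]
  nlinarith [h]

lemma Rz_mulVec (a b : ℝ) (x : Fin 3 → ℝ) :
    (Rz a b).mulVec x = ![a * x 0 - b * x 1, b * x 0 + a * x 1, x 2] := by
  funext i
  fin_cases i <;> simp [Rz, Matrix.mulVec, dotProduct, Fin.sum_univ_three] <;> ring

lemma Ry_mulVec (c s : ℝ) (x : Fin 3 → ℝ) :
    (Ry c s).mulVec x = ![c * x 0 + s * x 2, x 1, -s * x 0 + c * x 2] := by
  funext i
  fin_cases i <;> simp [Ry, Matrix.mulVec, dotProduct, Fin.sum_univ_three] <;> ring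

/-- transitivity of SO(3) on the unit sphere -/
lemma exists_so3_e3_eq {x : EuclideanSpace ℝ (Fin 3)} (hx : ‖x‖ = 1) :
    ∃ g : SO3, g.1.mulVec e3 = x := by
  have hsum := norm_sq_one hx
  set s : ℝ := Real.sqrt (x 0 ^ 2 + x 1 ^ 2) with hs
  have hs2 : s ^ 2 = x 0 ^ 2 + x 1 ^ 2 := Real.sq_sqrt (by positivity)
  have hcs : (x 2) ^ 2 + s ^ 2 = 1 := by rw [hs2]; linarith
  by_cases h0 : s = 0
  · have hx0 : x 0 = 0 := by nlinarith [sq_nonneg (x 0), sq_nonneg (x 1)]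
    have hx1 : x 1 = 0 := by nlinarith [sq_nonneg (x 0), sq_nonneg (x 1)]
    refine ⟨⟨Ry (x 2) 0, Ry_mem (by rw [h0] at hcs; simpa using hcs)⟩, ?_⟩
    rw [mulVec_e3]
    funext i
    fin_cases i <;> simp [Ry, hx0, hx1]
  · set a : ℝ := x 0 / s with ha
    set b : ℝ := x 1 / s with hb
    have hss : s ^ 2 ≠ 0 := pow_ne_zero _ h0
    have hab : a ^ 2 + b ^ 2 = 1 := by
      have e : a ^ 2 + b ^ 2 = (x 0 ^ 2 + x 1 ^ 2) / s ^ 2 := by rw [ha, hb]; ring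
      rw [e, ← hs2, div_self hss]
    have has : a * s = x 0 := by rw [ha, div_mul_cancel₀ _ h0]
    have hbs : b * s = x 1 := by rw [hb, div_mul_cancel₀ _ h0]
    refine ⟨⟨Rz a b, Rz_mem hab⟩ * ⟨Ry (x 2) s, Ry_mem hcs⟩, ?_⟩
    have hcoe : ((⟨Rz a b, Rz_mem hab⟩ * ⟨Ry (x 2) s, Ry_mem hcs⟩ : SO3) : Matrix (Fin 3) (Fin 3) ℝ)
        = Rz a b * Ry (x 2) s := rfl
    rw [hcoe, ← Matrix.mulVec_mulVec, mulVec_e3]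
    have hRy : (fun i => Ry (x 2) s i 2) = ![s, 0, x 2] := by
      funext i; fin_cases i <;> simp [Ry]
    rw [hRy, Rz_mulVec]
    funext i
    fin_cases i <;> simp <;> linarith [has, hbs]

/-- transitivity of the stabilizer of e3 on circles of latitude -/
lemma exists_latitude {x y : Fin 3 → ℝ} (hxy : x 0 ^ 2 + x 1 ^ 2 = y 0 ^ 2 + y 1 ^ 2)
    (h2 : x 2 = y 2) :
    ∃ h : SO3, h.1.mulVec e3 = e3 ∧ h.1.mulVec x = y := by
  set s : ℝ := Real.sqrt (x 0 ^ 2 + x 1 ^ 2) with hs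
  have hs2 : s ^ 2 = x 0 ^ 2 + x 1 ^ 2 := Real.sq_sqrt (by positivity)
  by_cases h0 : s = 0
  · have hx0 : x 0 = 0 := by nlinarith [sq_nonneg (x 0), sq_nonneg (x 1)]
    have hx1 : x 1 = 0 := by nlinarith [sq_nonneg (x 0), sq_nonneg (x 1)]
    have hy0 : y 0 = 0 := by nlinarith [sq_nonneg (y 0), sq_nonneg (y 1)]
    have hy1 : y 1 = 0 := by nlinarith [sq_nonneg (y 0), sq_nonneg (y 1)]
    have hxy' : x = y := by
      funext i; fin_cases i
      · exact hx0.trans hy0.symm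
      · exact hx1.trans hy1.symm
      · exact h2
    exact ⟨1, by simp, by simp [hxy']⟩
  · set a : ℝ := x 0 / s with ha
    set b : ℝ := x 1 / s with hb
    set a' : ℝ := y 0 / s with ha'
    set b' : ℝ := y 1 / s with hb'
    have hss : s ^ 2 ≠ 0 := pow_ne_zero _ h0
    have hab : a ^ 2 + b ^ 2 = 1 := by
      have e : a ^ 2 + b ^ 2 = (x 0 ^ 2 + x 1 ^ 2) / s ^ 2 := by rw [ha, hb]; ring
      rw [e, ← hs2, div_self hss]
    have hab' : a' ^ 2 + b' ^ 2 = 1 := by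
      have e : a' ^ 2 + b' ^ 2 = (y 0 ^ 2 + y 1 ^ 2) / s ^ 2 := by rw [ha', hb']; ring
      rw [e, ← hxy, ← hs2, div_self hss]
    have hba : a ^ 2 + (-b) ^ 2 = 1 := by rw [neg_sq]; exact hab
    have e0 : a * x 0 + b * x 1 = s := by
      have e : a * x 0 + b * x 1 = (x 0 ^ 2 + x 1 ^ 2) / s := by rw [ha, hb]; ring
      rw [e, ← hs2, sq, mul_div_assoc, div_self h0, mul_one]
    have e1 : -b * x 0 + a * x 1 = 0 := by rw [ha, hb]; ring
    have f0 : a' * s = y 0 := by rw [ha', div_mul_cancel₀ _ h0]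
    have f1 : b' * s = y 1 := by rw [hb', div_mul_cancel₀ _ h0]
    have step1 : (Rz a (-b)).mulVec x = ![s, 0, x 2] := by
      rw [Rz_mulVec]
      funext i
      fin_cases i <;> simp <;> linarith [e0, e1]
    have step2 : (Rz a' b').mulVec ![s, 0, x 2] = y := by
      rw [Rz_mulVec]
      funext i
      fin_cases i <;> simp <;> linarith [f0, f1, h2]
    refine ⟨⟨Rz a' b', Rz_mem hab'⟩ * ⟨Rz a (-b), Rz_mem hba⟩, ?_, ?_⟩
    · have hcoe : ((⟨Rz a' b', Rz_mem hab'⟩ * ⟨Rz a (-b), Rz_mem hba⟩ : SO3)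
          : Matrix (Fin 3) (Fin 3) ℝ) = Rz a' b' * Rz a (-b) := rfl
      rw [hcoe, ← Matrix.mulVec_mulVec]
      have h1 : (Rz a (-b)).mulVec e3 = e3 := by
        rw [mulVec_e3]
        funext i; fin_cases i <;> simp [Rz, e3, EuclideanSpace.single_apply]
      rw [h1, mulVec_e3]
      funext i; fin_cases i <;> simp [Rz, e3, EuclideanSpace.single_apply]
    · have hcoe : ((⟨Rz a' b', Rz_mem hab'⟩ * ⟨Rz a (-b), Rz_mem hba⟩ : SO3)
          : Matrix (Fin 3) (Fin 3) ℝ) = Rz a' b' * Rz a (-b) := rfl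
      rw [hcoe, ← Matrix.mulVec_mulVec, step1, step2]

/-! ## The representation -/

abbrev Ed (d : ℕ) := EuclideanSpace ℝ (Fin d)

section Rep

variable {d : ℕ} (ρ : SO3 →* Matrix.orthogonalGroup (Fin d) ℝ)

/-- the action as a linear map -/
def Lg (g : SO3) : Ed d →ₗ[ℝ] Ed d where
  toFun v := WithLp.toLp 2 ((ρ g : Matrix (Fin d) (Fin d) ℝ).mulVec v)
  map_add' x y := congrArg (WithLp.toLp 2) (Matrix.mulVec_add _ x y)
  map_smul' c x := congrArg (WithLp.toLp 2) (Matrix.mulVec_smul _ c x)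

lemma Lg_apply (g : SO3) (v : Ed d) : Lg ρ g v = WithLp.toLp 2 ((ρ g : Matrix (Fin d) (Fin d) ℝ).mulVec v) := rfl

lemma Lg_mul (g h : SO3) : Lg ρ (g * h) = (Lg ρ g) ∘ₗ (Lg ρ h) := by
  refine LinearMap.ext fun v => ?_
  show WithLp.toLp 2 ((ρ (g * h) : Matrix (Fin d) (Fin d) ℝ).mulVec v)
      = WithLp.toLp 2 ((ρ g : Matrix (Fin d) (Fin d) ℝ).mulVec ((ρ h : Matrix (Fin d) (Fin d) ℝ).mulVec v))
  rw [_root_.map_mul, Matrix.mulVec_mulVec]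
  rfl

lemma Lg_one : Lg ρ 1 = LinearMap.id := by
  refine LinearMap.ext fun v => ?_
  show WithLp.toLp 2 ((ρ 1 : Matrix (Fin d) (Fin d) ℝ).mulVec v) = v
  rw [_root_.map_one]
  show WithLp.toLp 2 ((1 : Matrix (Fin d) (Fin d) ℝ).mulVec v) = v
  rw [Matrix.one_mulVec]

lemma rho_transpose (g : SO3) :
    ((ρ g : Matrix (Fin d) (Fin d) ℝ))ᵀ = (ρ (gi g) : Matrix (Fin d) (Fin d) ℝ) := by
  have h1 : (ρ (gi g) : Matrix (Fin d) (Fin d) ℝ) * (ρ g : Matrix (Fin d) (Fin d) ℝ) = 1 := by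
    have : ρ (gi g) * ρ g = 1 := by rw [← _root_.map_mul, gi_mul, _root_.map_one]
    exact congrArg Subtype.val this
  have h2 : (ρ g : Matrix (Fin d) (Fin d) ℝ) * star (ρ g : Matrix (Fin d) (Fin d) ℝ) = 1 :=
    (ρ g).2.2
  calc ((ρ g : Matrix (Fin d) (Fin d) ℝ))ᵀ
      = star (ρ g : Matrix (Fin d) (Fin d) ℝ) := (star_eq_transpose _).symm
    _ = 1 * star (ρ g : Matrix (Fin d) (Fin d) ℝ) := (one_mul _).symm
    _ = ((ρ (gi g) : Matrix (Fin d) (Fin d) ℝ) * (ρ g : Matrix (Fin d) (Fin d) ℝ))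
          * star (ρ g : Matrix (Fin d) (Fin d) ℝ) := by rw [h1]
    _ = (ρ (gi g) : Matrix (Fin d) (Fin d) ℝ)
          * ((ρ g : Matrix (Fin d) (Fin d) ℝ) * star (ρ g : Matrix (Fin d) (Fin d) ℝ)) := by
          rw [mul_assoc]
    _ = (ρ (gi g) : Matrix (Fin d) (Fin d) ℝ) := by rw [h2, mul_one]

lemma inner_eq_dot (x y : Ed d) : ⟪x, y⟫ = dotProduct x y := by
  rw [EuclideanSpace.inner_eq_star_dotProduct, star_trivial, dotProduct_comm]

lemma inner_Lg (g : SO3) (x y : Ed d) : ⟪Lg ρ g x, y⟫ = ⟪x, Lg ρ (gi g) y⟫ := by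
  rw [inner_eq_dot, inner_eq_dot, Lg_apply, Lg_apply, WithLp.ofLp_toLp, WithLp.ofLp_toLp, ← rho_transpose,
    Matrix.dotProduct_mulVec, Matrix.vecMul_transpose]

/-! ## The stabilizer of `e3` and its fixed subspace -/

def Hfix (g : SO3) : Prop := (g.1).mulVec e3 = e3

lemma Hfix_one : Hfix (1 : SO3) := by
  show ((1 : SO3) : Matrix (Fin 3) (Fin 3) ℝ).mulVec e3 = e3
  show (1 : Matrix (Fin 3) (Fin 3) ℝ).mulVec e3 = e3
  rw [Matrix.one_mulVec]

lemma Hfix_mul {g h : SO3} (hg : Hfix g) (hh : Hfix h) : Hfix (g * h) := by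
  show ((g * h : SO3) : Matrix (Fin 3) (Fin 3) ℝ).mulVec e3 = e3
  have : ((g * h : SO3) : Matrix (Fin 3) (Fin 3) ℝ) = g.1 * h.1 := rfl
  rw [this, ← Matrix.mulVec_mulVec, hh, hg]

lemma Hfix_gi {g : SO3} (hg : Hfix g) : Hfix (gi g) := by
  show (g.1ᵀ).mulVec e3 = e3
  conv_lhs => rw [← hg]
  rw [Matrix.mulVec_mulVec, so3_orth, Matrix.one_mulVec]

/-- fixed subspace of the stabilizer subgroup -/
def Ffix : Submodule ℝ (Ed d) where
  carrier := {w | ∀ g : SO3, Hfix g → Lg ρ g w = w}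
  add_mem' := fun ha hb g hg => by rw [_root_.map_add, ha g hg, hb g hg]
  zero_mem' := fun g hg => map_zero _
  smul_mem' := fun c w hw g hg => by rw [_root_.map_smul, hw g hg]

lemma mem_Ffix_iff {w : Ed d} : w ∈ Ffix ρ ↔ ∀ g : SO3, Hfix g → Lg ρ g w = w := Iff.rfl

/-! ## A general fact: orthogonal projections commute with operators preserving
the subspace whose (formal) adjoint also preserves the subspace. -/

/-- projection onto a submodule, as an endomorphism -/
def projL {E : Type*} [NormedAddCommGroup E] [InnerProductSpace ℝ E] [FiniteDimensional ℝ E]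
    (N : Submodule ℝ E) : E →ₗ[ℝ] E :=
  N.subtype ∘ₗ N.orthogonalProjectionOnto.toLinearMap

lemma projL_mem {E : Type*} [NormedAddCommGroup E] [InnerProductSpace ℝ E]
    [FiniteDimensional ℝ E] (N : Submodule ℝ E) (x : E) : projL N x ∈ N :=
  (N.orthogonalProjectionOnto x).2

lemma projL_eq_self {E : Type*} [NormedAddCommGroup E] [InnerProductSpace ℝ E]
    [FiniteDimensional ℝ E] {N : Submodule ℝ E} {x : E} (hx : x ∈ N) : projL N x = x :=
  congrArg Subtype.val (Submodule.orthogonalProjectionOnto_mem_subspace_eq_self (⟨x, hx⟩ : N))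

lemma projL_perp {E : Type*} [NormedAddCommGroup E] [InnerProductSpace ℝ E]
    [FiniteDimensional ℝ E] {N : Submodule ℝ E} {x : E} (hx : x ∈ Nᗮ) : projL N x = 0 := by
  have := Submodule.orthogonalProjectionOnto_apply_of_mem_orthogonal hx
  show (N.orthogonalProjectionOnto x : E) = 0
  rw [this]
  rfl

lemma projL_inner {E : Type*} [NormedAddCommGroup E] [InnerProductSpace ℝ E]
    [FiniteDimensional ℝ E] (N : Submodule ℝ E) (x y : E) :
    ⟪projL N x, y⟫ = ⟪x, projL N y⟫ :=
  Submodule.inner_starProjection_left_eq_right N x y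

lemma proj_comm {E : Type*} [NormedAddCommGroup E] [InnerProductSpace ℝ E]
    [FiniteDimensional ℝ E] (N : Submodule ℝ E) (T T' : E →ₗ[ℝ] E)
    (hadj : ∀ x y, ⟪T x, y⟫ = ⟪x, T' y⟫)
    (hT : ∀ m ∈ N, T m ∈ N) (hT' : ∀ m ∈ N, T' m ∈ N) (x : E) :
    projL N (T x) = T (projL N x) := by
  have hperp : T (x - projL N x) ∈ Nᗮ := by
    intro n hn
    rw [real_inner_comm, hadj]
    have : T' n ∈ N := hT' n hn
    have h2 := Submodule.sub_starProjection_mem_orthogonal (K := N) x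
    have h3 : (x - projL N x) ∈ Nᗮ := h2
    rw [real_inner_comm]
    exact (Submodule.mem_orthogonal N _).mp h3 _ this
  have hx : x = projL N x + (x - projL N x) := by abel
  calc projL N (T x) = projL N (T (projL N x + (x - projL N x))) := by rw [← hx]
    _ = projL N (T (projL N x)) + projL N (T (x - projL N x)) := by rw [map_add, map_add]
    _ = T (projL N x) + 0 := by
        rw [projL_eq_self (hT _ (projL_mem N x)), projL_perp hperp]
    _ = T (projL N x) := by rw [add_zero]

/-! ## The span of the representation operators -/

def Alg : Submodule ℝ (Ed d →ₗ[ℝ] Ed d) := Submodule.span ℝ (Set.range (Lg ρ))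

lemma Lg_mem_Alg (g : SO3) : Lg ρ g ∈ Alg ρ := Submodule.subset_span ⟨g, rfl⟩

lemma id_mem_Alg : LinearMap.id ∈ Alg ρ := by
  rw [← Lg_one ρ]; exact Lg_mem_Alg ρ 1

lemma Alg_comp {A B : Ed d →ₗ[ℝ] Ed d} (hA : A ∈ Alg ρ) (hB : B ∈ Alg ρ) :
    A ∘ₗ B ∈ Alg ρ := by
  have hgen : ∀ g : SO3, ∀ B ∈ Alg ρ, (Lg ρ g) ∘ₗ B ∈ Alg ρ := by
    intro g B hB
    refine Submodule.span_induction ?_ ?_ ?_ ?_ hB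
    · rintro _ ⟨h, rfl⟩
      rw [← Lg_mul]
      exact Lg_mem_Alg ρ _
    · rw [LinearMap.comp_zero]; exact Submodule.zero_mem _
    · intro x y _ _ hx hy
      rw [LinearMap.comp_add]; exact Submodule.add_mem _ hx hy
    · intro a x _ hx
      rw [LinearMap.comp_smul]; exact Submodule.smul_mem _ _ hx
  refine Submodule.span_induction ?_ ?_ ?_ ?_ hA
  · intro x hx
    obtain ⟨g, rfl⟩ := hx
    exact hgen g B hB
  · rw [LinearMap.zero_comp]; exact Submodule.zero_mem _
  · intro x y _ _ hx hy
    rw [LinearMap.add_comp]; exact Submodule.add_mem _ hx hy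
  · intro a x _ hx
    rw [LinearMap.smul_comp]; exact Submodule.smul_mem _ _ hx

/-- anything commuting with all `Lg` commutes with the projection onto `Ffix`. -/
lemma comm_projF {J J' : Ed d →ₗ[ℝ] Ed d}
    (hadj : ∀ x y, ⟪J x, y⟫ = ⟪x, J' y⟫)
    (hJ : ∀ g : SO3, J ∘ₗ Lg ρ g = Lg ρ g ∘ₗ J)
    (hJ' : ∀ g : SO3, J' ∘ₗ Lg ρ g = Lg ρ g ∘ₗ J') (x : Ed d) :
    projL (Ffix ρ) (J x) = J (projL (Ffix ρ) x) := by
  refine proj_comm (Ffix ρ) J J' hadj ?_ ?_ x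
  · intro m hm g hg
    have := congrFun (congrArg DFunLike.coe (hJ g)) m
    simp only [LinearMap.comp_apply] at this
    rw [← this, hm g hg]
  · intro m hm g hg
    have := congrFun (congrArg DFunLike.coe (hJ' g)) m
    simp only [LinearMap.comp_apply] at this
    rw [← this, hm g hg]

end Rep

/-! ## Bicommutant: the projection onto `Ffix` lies in the span of the operators -/

section Bicommutant

variable {d : ℕ} (ρ : SO3 →* Matrix.orthogonalGroup (Fin d) ℝ)

abbrev Epi (d : ℕ) := PiLp 2 (fun _ : Fin d => Ed d)

def bas (i : Fin d) : Ed d := EuclideanSpace.single i 1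

def evalb : (Ed d →ₗ[ℝ] Ed d) →ₗ[ℝ] Epi d where
  toFun A := WithLp.toLp 2 (fun i => A (bas i))
  map_add' A B := rfl
  map_smul' c A := rfl

def DD (A : Ed d →ₗ[ℝ] Ed d) : Epi d →ₗ[ℝ] Epi d where
  toFun x := WithLp.toLp 2 (fun i => A (x i))
  map_add' x y := PiLp.ext fun i => map_add A _ _
  map_smul' c x := PiLp.ext fun i => map_smul A c _

def sing (j : Fin d) : Ed d →ₗ[ℝ] Epi d where
  toFun w := WithLp.toLp 2 (fun i => if i = j then w else 0)
  map_add' x y := PiLp.ext fun i => by by_cases h : i = j <;> simp [h]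
  map_smul' c x := PiLp.ext fun i => by by_cases h : i = j <;> simp [h]

def compo (i : Fin d) : Epi d →ₗ[ℝ] Ed d where
  toFun x := x i
  map_add' _ _ := rfl
  map_smul' _ _ := rfl

lemma apply_sum {ι : Type*} (s : Finset ι) (f : ι → Epi d) (i : Fin d) :
    (∑ j ∈ s, f j) i = ∑ j ∈ s, f j i := by
  classical
  induction s using Finset.induction_on with
  | empty => rfl
  | insert _ _ hne ih =>
    rw [Finset.sum_insert hne, Finset.sum_insert hne, ← ih]
    rfl

lemma sum_sing (x : Epi d) : ∑ j, sing j (x j) = x := by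
  refine PiLp.ext fun i => ?_
  rw [apply_sum]
  have : ∀ j : Fin d, (sing j (x j)) i = if i = j then x j else 0 := fun j => rfl
  simp only [this]
  simp

def Msub : Submodule ℝ (Epi d) := (Alg ρ).map evalb

lemma DD_adj (A A' : Ed d →ₗ[ℝ] Ed d) (h : ∀ x y : Ed d, ⟪A x, y⟫ = ⟪x, A' y⟫) :
    ∀ x y : Epi d, ⟪DD A x, y⟫ = ⟪x, DD A' y⟫ := by
  intro x y
  rw [PiLp.inner_apply, PiLp.inner_apply]
  exact Finset.sum_congr rfl fun i _ => h _ _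

lemma DD_evalb (A B : Ed d →ₗ[ℝ] Ed d) : DD A (evalb B) = evalb (A ∘ₗ B) :=
  PiLp.ext fun i => rfl

lemma DD_mem {A : Ed d →ₗ[ℝ] Ed d} (hA : A ∈ Alg ρ) :
    ∀ m ∈ Msub ρ, DD A m ∈ Msub ρ := by
  rintro m ⟨B, hB, rfl⟩
  exact ⟨A ∘ₗ B, Alg_comp ρ hA hB, (DD_evalb A B).symm⟩

lemma QF_comm_DD (g : SO3) (x : Epi d) :
    projL (Msub ρ) (DD (Lg ρ g) x) = DD (Lg ρ g) (projL (Msub ρ) x) :=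
  proj_comm _ (DD (Lg ρ g)) (DD (Lg ρ (gi g))) (DD_adj _ _ (inner_Lg ρ g))
    (DD_mem ρ (Lg_mem_Alg ρ g)) (DD_mem ρ (Lg_mem_Alg ρ (gi g))) x

def Qij (i j : Fin d) : Ed d →ₗ[ℝ] Ed d := compo i ∘ₗ projL (Msub ρ) ∘ₗ sing j

lemma sing_Lg (j : Fin d) (g : SO3) (x : Ed d) :
    sing j (Lg ρ g x) = DD (Lg ρ g) (sing j x) := by
  refine PiLp.ext fun i => ?_
  show (if i = j then Lg ρ g x else 0) = Lg ρ g (if i = j then x else 0)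
  by_cases h : i = j <;> simp [h]

lemma Qij_comm_Lg (i j : Fin d) (g : SO3) :
    Qij ρ i j ∘ₗ Lg ρ g = Lg ρ g ∘ₗ Qij ρ i j :=
  LinearMap.ext fun x => by
    show (projL (Msub ρ) (sing j (Lg ρ g x))) i = Lg ρ g ((projL (Msub ρ) (sing j x)) i)
    rw [sing_Lg, QF_comm_DD]
    rfl

lemma adjoint_comm {J : Ed d →ₗ[ℝ] Ed d} (hJ : ∀ g, J ∘ₗ Lg ρ g = Lg ρ g ∘ₗ J) :
    ∀ g, (LinearMap.adjoint J) ∘ₗ Lg ρ g = Lg ρ g ∘ₗ (LinearMap.adjoint J) := by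
  intro g
  refine LinearMap.ext fun x => ?_
  refine ext_inner_right ℝ fun y => ?_
  have hcomm : ∀ z : Ed d, Lg ρ (gi g) (J z) = J (Lg ρ (gi g) z) := by
    intro z
    have := congrFun (congrArg DFunLike.coe (hJ (gi g))) z
    simpa only [LinearMap.comp_apply] using this.symm
  calc ⟪(LinearMap.adjoint J) ((Lg ρ g) x), y⟫
      = ⟪Lg ρ g x, J y⟫ := LinearMap.adjoint_inner_left J y _
    _ = ⟪x, Lg ρ (gi g) (J y)⟫ := inner_Lg ρ g _ _
    _ = ⟪x, J (Lg ρ (gi g) y)⟫ := by rw [hcomm]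
    _ = ⟪(LinearMap.adjoint J) x, Lg ρ (gi g) y⟫ := (LinearMap.adjoint_inner_left J _ x).symm
    _ = ⟪(Lg ρ g) ((LinearMap.adjoint J) x), y⟫ := (inner_Lg ρ g _ _).symm

lemma P_comm_Qij (i j : Fin d) (x : Ed d) :
    projL (Ffix ρ) (Qij ρ i j x) = Qij ρ i j (projL (Ffix ρ) x) :=
  comm_projF ρ (J' := LinearMap.adjoint (Qij ρ i j))
    (fun x y => (LinearMap.adjoint_inner_right _ _ _).symm)
    (Qij_comm_Lg ρ i j) (adjoint_comm ρ (Qij_comm_Lg ρ i j)) x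

lemma QF_apply_entry (w : Epi d) (i : Fin d) :
    (projL (Msub ρ) w) i = ∑ j, Qij ρ i j (w j) := by
  conv_lhs => rw [← sum_sing w, map_sum]
  rw [apply_sum]
  exact Finset.sum_congr rfl fun j _ => rfl

lemma DP_comm_QF (x : Epi d) :
    projL (Msub ρ) (DD (projL (Ffix ρ)) x) = DD (projL (Ffix ρ)) (projL (Msub ρ) x) := by
  refine PiLp.ext fun i => ?_
  show (projL (Msub ρ) (DD (projL (Ffix ρ)) x)) i = projL (Ffix ρ) ((projL (Msub ρ) x) i)
  rw [QF_apply_entry, QF_apply_entry, map_sum]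
  refine Finset.sum_congr rfl fun j _ => ?_
  show Qij ρ i j (projL (Ffix ρ) (x j)) = projL (Ffix ρ) (Qij ρ i j (x j))
  rw [P_comm_Qij]

lemma P_mem_Alg : projL (Ffix ρ) ∈ Alg ρ := by
  have hbm : (evalb LinearMap.id : Epi d) ∈ Msub ρ := ⟨LinearMap.id, id_mem_Alg ρ, rfl⟩
  have h1 : projL (Msub ρ) (evalb LinearMap.id) = evalb LinearMap.id := projL_eq_self hbm
  have h2 : DD (projL (Ffix ρ)) (evalb LinearMap.id) ∈ Msub ρ := by
    rw [← h1, ← DP_comm_QF]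
    exact projL_mem _ _
  obtain ⟨B, hB, hBe⟩ := h2
  have : B = projL (Ffix ρ) := by
    refine (EuclideanSpace.basisFun (Fin d) ℝ).toBasis.ext fun i => ?_
    have hi : (evalb B : Epi d) i = (DD (projL (Ffix ρ)) (evalb LinearMap.id)) i :=
      congrArg (fun z : Epi d => z i) hBe
    have h3 : (evalb B : Epi d) i = B (bas i) := rfl
    have h4 : (DD (projL (Ffix ρ)) (evalb LinearMap.id)) i = projL (Ffix ρ) (bas i) := rfl
    rw [h3, h4] at hi
    simpa [OrthonormalBasis.coe_toBasis, EuclideanSpace.basisFun_apply, bas] using hi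
  rw [← this]
  exact hB

end Bicommutant

/-! ## Gelfand trick: double cosets, symmetry, commutativity -/

section Gelfand

variable {d : ℕ} (ρ : SO3 →* Matrix.orthogonalGroup (Fin d) ℝ)

lemma double_coset (g : SO3) : ∃ h k : SO3, Hfix h ∧ Hfix k ∧ gi g = h * g * k := by
  have hx : g.1.mulVec e3 = fun i => g.1 i 2 := mulVec_e3 g.1
  have hy : g.1ᵀ.mulVec e3 = fun i => g.1 2 i := by
    rw [mulVec_e3 g.1ᵀ]; rfl
  have hcol : (g.1 0 2) ^ 2 + (g.1 1 2) ^ 2 + (g.1 2 2) ^ 2 = 1 := by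
    have h := congrFun (congrFun (so3_orth g) 2) 2
    rw [Matrix.mul_apply, Fin.sum_univ_three] at h
    have h1 : (1 : Matrix (Fin 3) (Fin 3) ℝ) 2 2 = 1 := by simp
    rw [h1] at h
    simp only [Matrix.transpose_apply] at h
    nlinarith [h]
  have hrow : (g.1 2 0) ^ 2 + (g.1 2 1) ^ 2 + (g.1 2 2) ^ 2 = 1 := by
    have h := congrFun (congrFun (so3_orth' g) 2) 2
    rw [Matrix.mul_apply, Fin.sum_univ_three] at h
    have h1 : (1 : Matrix (Fin 3) (Fin 3) ℝ) 2 2 = 1 := by simp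
    rw [h1] at h
    simp only [Matrix.transpose_apply] at h
    nlinarith [h]
  obtain ⟨h, hhe3, hhxy⟩ := exists_latitude
    (x := fun i => g.1 i 2) (y := fun i => g.1 2 i)
    (by beta_reduce; nlinarith [hcol, hrow]) (by simp)
  have hfixh : Hfix h := hhe3
  have hk0 : Hfix (g * h * g) := by
    show ((g * h * g : SO3) : Matrix (Fin 3) (Fin 3) ℝ).mulVec e3 = e3
    have hco : ((g * h * g : SO3) : Matrix (Fin 3) (Fin 3) ℝ) = g.1 * h.1 * g.1 := rfl
    rw [hco, ← Matrix.mulVec_mulVec, ← Matrix.mulVec_mulVec, hx, hhxy, ← hy,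
      Matrix.mulVec_mulVec, so3_orth', Matrix.one_mulVec]
  refine ⟨h, gi (g * h * g), hfixh, Hfix_gi hk0, ?_⟩
  apply Subtype.ext
  show g.1ᵀ = ((h * g : SO3) : Matrix (Fin 3) (Fin 3) ℝ) * ((g * h * g : SO3) : Matrix (Fin 3) (Fin 3) ℝ)ᵀ
  have hco1 : ((h * g : SO3) : Matrix (Fin 3) (Fin 3) ℝ) = h.1 * g.1 := rfl
  have hco2 : ((g * h * g : SO3) : Matrix (Fin 3) (Fin 3) ℝ) = g.1 * h.1 * g.1 := rfl
  rw [hco1, hco2, Matrix.transpose_mul, Matrix.transpose_mul]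
  calc g.1ᵀ = 1 * g.1ᵀ := (one_mul _).symm
    _ = h.1 * h.1ᵀ * g.1ᵀ := by rw [so3_orth' h]
    _ = h.1 * (1 * (h.1ᵀ * g.1ᵀ)) := by rw [one_mul, mul_assoc]
    _ = h.1 * (g.1 * g.1ᵀ * (h.1ᵀ * g.1ᵀ)) := by rw [so3_orth' g]
    _ = h.1 * g.1 * (g.1ᵀ * (h.1ᵀ * g.1ᵀ)) := by noncomm_ring
  
lemma P_comp_Lg_fix {h : SO3} (hh : Hfix h) (x : Ed d) :
    projL (Ffix ρ) (Lg ρ h x) = projL (Ffix ρ) x := by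
  refine ext_inner_right ℝ fun y => ?_
  calc ⟪projL (Ffix ρ) (Lg ρ h x), y⟫
      = ⟪Lg ρ h x, projL (Ffix ρ) y⟫ := projL_inner _ _ _
    _ = ⟪x, Lg ρ (gi h) (projL (Ffix ρ) y)⟫ := inner_Lg ρ h _ _
    _ = ⟪x, projL (Ffix ρ) y⟫ := by rw [projL_mem (Ffix ρ) y (gi h) (Hfix_gi hh)]
    _ = ⟪projL (Ffix ρ) x, y⟫ := (projL_inner _ _ _).symm

lemma Lg_fix_P {h : SO3} (hh : Hfix h) (x : Ed d) :
    Lg ρ h (projL (Ffix ρ) x) = projL (Ffix ρ) x :=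
  projL_mem (Ffix ρ) x h hh

/-- compression of an operator to the fixed space -/
def Sop (A : Ed d →ₗ[ℝ] Ed d) : Ed d →ₗ[ℝ] Ed d :=
  projL (Ffix ρ) ∘ₗ A ∘ₗ projL (Ffix ρ)

lemma Sop_apply (A : Ed d →ₗ[ℝ] Ed d) (x : Ed d) :
    Sop ρ A x = projL (Ffix ρ) (A (projL (Ffix ρ) x)) := rfl

lemma Sop_symm {A : Ed d →ₗ[ℝ] Ed d} (hA : A ∈ Alg ρ) :
    ∀ x y : Ed d, ⟪Sop ρ A x, y⟫ = ⟪x, Sop ρ A y⟫ := by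
  refine Submodule.span_induction ?_ ?_ ?_ ?_ hA
  · rintro _ ⟨g, rfl⟩ x y
    obtain ⟨h, k, hh, hk, hgk⟩ := double_coset g
    have key : ∀ z : Ed d, projL (Ffix ρ) (Lg ρ (gi g) (projL (Ffix ρ) z))
        = projL (Ffix ρ) (Lg ρ g (projL (Ffix ρ) z)) := by
      intro z
      rw [hgk, Lg_mul, Lg_mul]
      show projL (Ffix ρ) (Lg ρ h (Lg ρ g (Lg ρ k (projL (Ffix ρ) z))))
          = projL (Ffix ρ) (Lg ρ g (projL (Ffix ρ) z))
      rw [Lg_fix_P ρ hk, P_comp_Lg_fix ρ hh]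
    calc ⟪Sop ρ (Lg ρ g) x, y⟫
        = ⟪Lg ρ g (projL (Ffix ρ) x), projL (Ffix ρ) y⟫ := projL_inner _ _ _
      _ = ⟪projL (Ffix ρ) x, Lg ρ (gi g) (projL (Ffix ρ) y)⟫ := inner_Lg ρ g _ _
      _ = ⟪x, projL (Ffix ρ) (Lg ρ (gi g) (projL (Ffix ρ) y))⟫ := projL_inner _ _ _
      _ = ⟪x, Sop ρ (Lg ρ g) y⟫ := by rw [key]; rfl
  · intro x y
    show ⟪projL (Ffix ρ) ((0 : Ed d →ₗ[ℝ] Ed d) (projL (Ffix ρ) x)), y⟫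
        = ⟪x, projL (Ffix ρ) ((0 : Ed d →ₗ[ℝ] Ed d) (projL (Ffix ρ) y))⟫
    simp
  · intro A B _ _ hA' hB' x y
    show ⟪projL (Ffix ρ) ((A + B) (projL (Ffix ρ) x)), y⟫
        = ⟪x, projL (Ffix ρ) ((A + B) (projL (Ffix ρ) y))⟫
    rw [LinearMap.add_apply, LinearMap.add_apply, map_add, map_add,
      inner_add_left, inner_add_right]
    exact congrArg₂ (· + ·) (hA' x y) (hB' x y)
  · intro c A _ hA' x y
    show ⟪projL (Ffix ρ) ((c • A) (projL (Ffix ρ) x)), y⟫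
        = ⟪x, projL (Ffix ρ) ((c • A) (projL (Ffix ρ) y))⟫
    rw [LinearMap.smul_apply, LinearMap.smul_apply, _root_.map_smul, _root_.map_smul,
      inner_smul_left, inner_smul_right]
    have : ⟪projL (Ffix ρ) (A (projL (Ffix ρ) x)), y⟫ = ⟪x, projL (Ffix ρ) (A (projL (Ffix ρ) y))⟫ := hA' x y
    rw [this]
    simp [starRingEnd_apply]

lemma Sop_Sop {A B : Ed d →ₗ[ℝ] Ed d} (x : Ed d) :
    Sop ρ A (Sop ρ B x) = Sop ρ (A ∘ₗ projL (Ffix ρ) ∘ₗ B) x := by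
  show projL (Ffix ρ) (A (projL (Ffix ρ) (projL (Ffix ρ) (B (projL (Ffix ρ) x)))))
      = projL (Ffix ρ) (A (projL (Ffix ρ) (B (projL (Ffix ρ) x))))
  rw [projL_eq_self (projL_mem _ _)]

lemma Sop_comm {A B : Ed d →ₗ[ℝ] Ed d} (hA : A ∈ Alg ρ) (hB : B ∈ Alg ρ) (x : Ed d) :
    Sop ρ A (Sop ρ B x) = Sop ρ B (Sop ρ A x) := by
  have hC : A ∘ₗ projL (Ffix ρ) ∘ₗ B ∈ Alg ρ :=
    Alg_comp ρ hA (Alg_comp ρ (P_mem_Alg ρ) hB)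
  refine ext_inner_right ℝ fun y => ?_
  calc ⟪Sop ρ A (Sop ρ B x), y⟫
      = ⟪Sop ρ (A ∘ₗ projL (Ffix ρ) ∘ₗ B) x, y⟫ := by rw [Sop_Sop]
    _ = ⟪x, Sop ρ (A ∘ₗ projL (Ffix ρ) ∘ₗ B) y⟫ := Sop_symm ρ hC x y
    _ = ⟪x, Sop ρ A (Sop ρ B y)⟫ := by rw [Sop_Sop]
    _ = ⟪Sop ρ A x, Sop ρ B y⟫ := (Sop_symm ρ hA x _).symm
    _ = ⟪Sop ρ B (Sop ρ A x), y⟫ := by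
        rw [real_inner_comm, Sop_symm ρ hB y (Sop ρ A x), real_inner_comm]

/-! ## Transitivity from irreducibility -/

def evalx (x : Ed d) : (Ed d →ₗ[ℝ] Ed d) →ₗ[ℝ] Ed d where
  toFun A := A x
  map_add' _ _ := rfl
  map_smul' _ _ := rfl

lemma Alg_reach
    (hirr : ∀ W : Submodule ℝ (EuclideanSpace ℝ (Fin d)),
      (∀ R : SO3, ∀ w ∈ W, WithLp.toLp 2 ((ρ R : Matrix (Fin d) (Fin d) ℝ).mulVec w) ∈ W) → W = ⊥ ∨ W = ⊤)
    {x : Ed d} (hx : x ≠ 0) (y : Ed d) : ∃ A ∈ Alg ρ, A x = y := by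
  set W : Submodule ℝ (Ed d) := (Alg ρ).map (evalx x) with hW
  have hinv : ∀ R : SO3, ∀ w ∈ W, WithLp.toLp 2 ((ρ R : Matrix (Fin d) (Fin d) ℝ).mulVec w) ∈ W := by
    rintro R w ⟨A, hA, rfl⟩
    refine ⟨Lg ρ R ∘ₗ A, Alg_comp ρ (Lg_mem_Alg ρ R) hA, ?_⟩
    rfl
  have hxW : x ∈ W := ⟨LinearMap.id, id_mem_Alg ρ, rfl⟩
  rcases hirr W hinv with hbot | htop
  · exfalso
    apply hx
    rw [hbot] at hxW
    simpa using hxW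
  · have hyW : y ∈ W := by rw [htop]; trivial
    obtain ⟨A, hA, hAx⟩ := hyW
    exact ⟨A, hA, hAx⟩

/-! ## The fixed space is (at most) a line -/

lemma fix_line
    (hirr : ∀ W : Submodule ℝ (EuclideanSpace ℝ (Fin d)),
      (∀ R : SO3, ∀ w ∈ W, WithLp.toLp 2 ((ρ R : Matrix (Fin d) (Fin d) ℝ).mulVec w) ∈ W) → W = ⊥ ∨ W = ⊤)
    {u v : Ed d} (hu : u ∈ Ffix ρ) (hv : v ∈ Ffix ρ) (hun : ‖u‖ = 1) (hvn : ‖v‖ = 1) :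
    v = u ∨ v = -u := by
  have hu0 : u ≠ 0 := fun hc => by rw [hc] at hun; simp at hun
  obtain ⟨A₀, hA₀, hA₀u⟩ := Alg_reach ρ hirr hu0 v
  have hrestrict : ∀ z ∈ Ffix ρ, Sop ρ A₀ z ∈ Ffix ρ := fun z _ => projL_mem _ _
  set T : Ffix ρ →ₗ[ℝ] Ffix ρ := (Sop ρ A₀).restrict hrestrict with hT
  have hTcoe : ∀ z : Ffix ρ, (T z : Ed d) = Sop ρ A₀ (z : Ed d) := fun z => rfl
  have hTsym : T.IsSymmetric := by
    intro x y
    have h := Sop_symm ρ hA₀ (x : Ed d) (y : Ed d)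
    rw [Submodule.coe_inner, Submodule.coe_inner, hTcoe, hTcoe]
    exact h
  haveI : Nontrivial (Ffix ρ) :=
    ⟨⟨⟨u, hu⟩, 0, fun hc => hu0 (by simpa using congrArg Subtype.val hc)⟩⟩
  obtain ⟨μ, hμ⟩ : ∃ μ, Module.End.HasEigenvalue T μ :=
    ⟨_, hTsym.hasEigenvalue_iSup_of_finiteDimensional⟩
  obtain ⟨w, hw⟩ := hμ.exists_hasEigenvector
  have hw0 : (w : Ed d) ≠ 0 := fun hc => hw.right (by exact Subtype.ext hc)
  have hSw : Sop ρ A₀ (w : Ed d) = μ • (w : Ed d) := by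
    have h := congrArg Subtype.val hw.apply_eq_smul
    rw [hTcoe] at h
    exact h
  have hall : ∀ f : Ffix ρ, Sop ρ A₀ (f : Ed d) = μ • (f : Ed d) := by
    intro f
    obtain ⟨B, hB, hBw⟩ := Alg_reach ρ hirr hw0 (f : Ed d)
    have h1 : Sop ρ B (w : Ed d) = (f : Ed d) := by
      rw [Sop_apply, projL_eq_self w.2, hBw, projL_eq_self f.2]
    calc Sop ρ A₀ (f : Ed d) = Sop ρ A₀ (Sop ρ B (w : Ed d)) := by rw [h1]
      _ = Sop ρ B (Sop ρ A₀ (w : Ed d)) := Sop_comm ρ hA₀ hB _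
      _ = Sop ρ B (μ • (w : Ed d)) := by rw [hSw]
      _ = μ • Sop ρ B (w : Ed d) := map_smul _ _ _
      _ = μ • (f : Ed d) := by rw [h1]
  have hvu : v = μ • u := by
    have h := hall ⟨u, hu⟩
    have hSu : Sop ρ A₀ u = v := by
      rw [Sop_apply, projL_eq_self hu, hA₀u, projL_eq_self hv]
    rw [hSu] at h
    exact h
  have hμ1 : |μ| = 1 := by
    have := hvn
    rw [hvu, norm_smul, hun, mul_one] at this
    simpa using this
  rcases abs_eq (by norm_num : (0:ℝ) ≤ 1) |>.mp hμ1 with h1 | h1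
  · left; rw [hvu, h1, one_smul]
  · right; rw [hvu, h1, neg_smul, one_smul]

end Gelfand

end

end SphAux


open SphAux in
/-- **Uniqueness of spherical harmonics up to sign.**
If `ρ` is an irreducible orthogonal representation of SO(3) on `ℝ^d` (`d ≥ 1`)
and `Y`, `Ỹ` are two normalized (`‖Y x‖ = 1`) equivariant functions from the
unit sphere of `ℝ³` to `ℝ^d`, then `Ỹ = Y` or `Ỹ = −Y` on the unit sphere. -/
theorem equivariant_sphere_map_unique_up_to_sign
    (d : ℕ) (hd : 1 ≤ d)
    (ρ : Matrix.specialOrthogonalGroup (Fin 3) ℝ →* Matrix.orthogonalGroup (Fin d) ℝ)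
    (hirr : ∀ W : Submodule ℝ (EuclideanSpace ℝ (Fin d)),
      (∀ R : Matrix.specialOrthogonalGroup (Fin 3) ℝ, ∀ w ∈ W,
        WithLp.toLp 2 ((ρ R : Matrix (Fin d) (Fin d) ℝ).mulVec w) ∈ W) →
      W = ⊥ ∨ W = ⊤)
    (Y Ytil : EuclideanSpace ℝ (Fin 3) → EuclideanSpace ℝ (Fin d))
    (hY : ∀ R : Matrix.specialOrthogonalGroup (Fin 3) ℝ,
      ∀ x : EuclideanSpace ℝ (Fin 3), ‖x‖ = 1 →
        Y (WithLp.toLp 2 ((R : Matrix (Fin 3) (Fin 3) ℝ).mulVec x))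
          = (ρ R : Matrix (Fin d) (Fin d) ℝ).mulVec (Y x))
    (hYtil : ∀ R : Matrix.specialOrthogonalGroup (Fin 3) ℝ,
      ∀ x : EuclideanSpace ℝ (Fin 3), ‖x‖ = 1 →
        Ytil (WithLp.toLp 2 ((R : Matrix (Fin 3) (Fin 3) ℝ).mulVec x))
          = (ρ R : Matrix (Fin d) (Fin d) ℝ).mulVec (Ytil x))
    (hnormY : ∀ x : EuclideanSpace ℝ (Fin 3), ‖x‖ = 1 → ‖Y x‖ = 1)
    (hnormYtil : ∀ x : EuclideanSpace ℝ (Fin 3), ‖x‖ = 1 → ‖Ytil x‖ = 1) :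
    (∀ x : EuclideanSpace ℝ (Fin 3), ‖x‖ = 1 → Ytil x = Y x)
    ∨ (∀ x : EuclideanSpace ℝ (Fin 3), ‖x‖ = 1 → Ytil x = -Y x) := by
  classical
  have hue : ‖SphAux.e3‖ = 1 := SphAux.norm_e3
  set u : EuclideanSpace ℝ (Fin d) := Y SphAux.e3 with hu_def
  set v : EuclideanSpace ℝ (Fin d) := Ytil SphAux.e3 with hv_def
  have huF : u ∈ SphAux.Ffix ρ := by
    intro g hg
    show WithLp.toLp 2 ((ρ g : Matrix (Fin d) (Fin d) ℝ).mulVec u) = u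
    rw [hu_def, ← hY g SphAux.e3 hue, hg]
  have hvF : v ∈ SphAux.Ffix ρ := by
    intro g hg
    show WithLp.toLp 2 ((ρ g : Matrix (Fin d) (Fin d) ℝ).mulVec v) = v
    rw [hv_def, ← hYtil g SphAux.e3 hue, hg]
  have hun : ‖u‖ = 1 := hnormY _ hue
  have hvn : ‖v‖ = 1 := hnormYtil _ hue
  rcases SphAux.fix_line ρ hirr huF hvF hun hvn with hvu | hvu
  · left
    intro x hx
    obtain ⟨g, hg⟩ := SphAux.exists_so3_e3_eq hx
    calc Ytil x = Ytil (WithLp.toLp 2 ((g : Matrix (Fin 3) (Fin 3) ℝ).mulVec SphAux.e3)) := by rw [hg]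
      _ = WithLp.toLp 2 ((ρ g : Matrix (Fin d) (Fin d) ℝ).mulVec v) := congrArg (WithLp.toLp 2) (hYtil g _ hue)
      _ = WithLp.toLp 2 ((ρ g : Matrix (Fin d) (Fin d) ℝ).mulVec u) := by rw [hvu]
      _ = Y (WithLp.toLp 2 ((g : Matrix (Fin 3) (Fin 3) ℝ).mulVec SphAux.e3)) := (congrArg (WithLp.toLp 2) (hY g _ hue)).symm
      _ = Y x := by rw [hg]
  · right
    intro x hx
    obtain ⟨g, hg⟩ := SphAux.exists_so3_e3_eq hx
    calc Ytil x = Ytil (WithLp.toLp 2 ((g : Matrix (Fin 3) (Fin 3) ℝ).mulVec SphAux.e3)) := by rw [hg]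
      _ = WithLp.toLp 2 ((ρ g : Matrix (Fin d) (Fin d) ℝ).mulVec v) := congrArg (WithLp.toLp 2) (hYtil g _ hue)
      _ = WithLp.toLp 2 ((ρ g : Matrix (Fin d) (Fin d) ℝ).mulVec (-u)) := by rw [hvu]; rfl
      _ = -(WithLp.toLp 2 ((ρ g : Matrix (Fin d) (Fin d) ℝ).mulVec u)) := map_neg (SphAux.Lg ρ g) u
      _ = -(Y (WithLp.toLp 2 ((g : Matrix (Fin 3) (Fin 3) ℝ).mulVec SphAux.e3))) :=
          (congrArg (fun z => -(WithLp.toLp 2 z)) (hY g _ hue)).symm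
      _ = -(Y x) := by rw [hg]
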